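/- Let X be a real Hilbert space and A a maximal monotone operator on X. Let u : [0, +∞) → X be Lipschitz continuous with u(t) ∈ D(A) for all t ≥ 0 and -u'(t) ∈ A(u(t)) for almost every t > 0. Then the function t ↦ inf { ‖v‖ : v ∈ A(u(t)) } is non-increasing on [0, +∞). -/

import Mathlib

open scoped InnerProductSpace

/-- A multivalued operator `A : X → 𝒫(X)` is monotone if
`⟪v₁ - v₂, x₁ - x₂⟫ ≥ 0` whenever `v₁ ∈ A x₁`, `v₂ ∈ A x₂`. -/
def IsMonotoneOperator {X : Type*} [NormedAddCommGroup X] [InnerProductSpace ℝ X]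
    (A : X → Set X) : Prop :=
  ∀ x₁ x₂ v₁ v₂, v₁ ∈ A x₁ → v₂ ∈ A x₂ → 0 ≤ ⟪v₁ - v₂, x₁ - x₂⟫_ℝ

/-- A monotone operator is maximal monotone if its graph is not properly contained
in the graph of any other monotone operator. -/
def IsMaximalMonotoneOperator {X : Type*} [NormedAddCommGroup X] [InnerProductSpace ℝ X]
    (A : X → Set X) : Prop :=
  IsMonotoneOperator A ∧
    ∀ B : X → Set X, IsMonotoneOperator B → (∀ x, A x ⊆ B x) → B = A

open Set MeasureTheory Filter Topology

lemma aux_max_mem {X : Type*} [NormedAddCommGroup X] [InnerProductSpace ℝ X]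
    {A : X → Set X} (hA : IsMaximalMonotoneOperator A) {x q : X}
    (h : ∀ y v, v ∈ A y → 0 ≤ ⟪q - v, x - y⟫_ℝ) : q ∈ A x := by
  have hsym : ∀ (a b c d : X), 0 ≤ ⟪a - b, c - d⟫_ℝ → 0 ≤ ⟪b - a, d - c⟫_ℝ := by
    intro a b c d hh
    rw [← neg_sub a b, ← neg_sub c d, inner_neg_neg]
    exact hh
  set B : X → Set X := fun y => A y ∪ {z | y = x ∧ z = q} with hB
  have hmono : IsMonotoneOperator B := by
    rintro x₁ x₂ v₁ v₂ (h₁ | ⟨rfl, rfl⟩) (h₂ | ⟨rfl, rfl⟩)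
    · exact hA.1 x₁ x₂ v₁ v₂ h₁ h₂
    · exact hsym _ _ _ _ (h x₁ v₁ h₁)
    · exact h x₂ v₂ h₂
    · simp
  have : B = A := hA.2 B hmono (fun y => subset_union_left)
  have hq : q ∈ B x := Or.inr ⟨rfl, rfl⟩
  rwa [this] at hq

lemma aux_mono_lintegral {g : ℝ → ℝ} (hg : Monotone g) (hgc : Continuous g) {a b : ℝ}
    (hab : a ≤ b) :
    ∫⁻ x in Set.Ioc a b, ENNReal.ofReal (deriv g x) ≤ ENNReal.ofReal (g b - g a) := by
  set h : ℕ → ℝ := fun n => 1 / (n + 1) with hh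
  have hhpos : ∀ n, 0 < h n := fun n => by positivity
  have hh0 : Tendsto h atTop (𝓝 0) := tendsto_one_div_add_atTop_nhds_zero_nat
  set G : ℕ → ℝ → ℝ := fun n x => (g (x + h n) - g x) / h n with hG
  have hGc : ∀ n, Continuous (G n) :=
    fun n => ((hgc.comp (continuous_id.add continuous_const)).sub hgc).div_const _
  have hGnn : ∀ n x, 0 ≤ G n x := by
    intro n x
    apply div_nonneg _ (hhpos n).le
    simp only [sub_nonneg]
    exact hg (le_add_of_nonneg_right (hhpos n).le)
  have key : ∀ᵐ x, ENNReal.ofReal (deriv g x)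
      = Filter.liminf (fun n => ENNReal.ofReal (G n x)) atTop := by
    filter_upwards [hg.ae_hasDerivAt] with x hx
    have hx' : HasDerivAt g (deriv g x) x := hx.deriv ▸ hx
    rw [hasDerivAt_iff_tendsto_slope] at hx'
    have hseq : Tendsto (fun n => x + h n) atTop (𝓝[≠] x) := by
      apply tendsto_nhdsWithin_of_tendsto_nhds_of_eventually_within
      · simpa using tendsto_const_nhds.add hh0
      · exact Eventually.of_forall fun n => by
          simp only [mem_compl_iff, mem_singleton_iff]
          nlinarith [hhpos n]
    have ht : Tendsto (fun n => G n x) atTop (𝓝 (deriv g x)) := by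
      have := hx'.comp hseq
      convert this using 2 with n
      simp only [Function.comp_apply, slope_def_field, hG]
      rw [add_sub_cancel_left]
    exact (((ENNReal.continuous_ofReal.tendsto _).comp ht).liminf_eq).symm
  calc ∫⁻ x in Set.Ioc a b, ENNReal.ofReal (deriv g x)
      = ∫⁻ x in Set.Ioc a b, Filter.liminf (fun n => ENNReal.ofReal (G n x)) atTop :=
        lintegral_congr_ae (ae_restrict_of_ae key)
    _ ≤ Filter.liminf (fun n => ∫⁻ x in Set.Ioc a b, ENNReal.ofReal (G n x)) atTop :=
        lintegral_liminf_le fun n => (ENNReal.measurable_ofReal.comp (hGc n).measurable)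
    _ ≤ Filter.liminf (fun n => ENNReal.ofReal (g (b + h n) - g a)) atTop := by
        refine Filter.liminf_le_liminf (Eventually.of_forall fun n => ?_)
        have hint : IntegrableOn (G n) (Set.Ioc a b) := (hGc n).integrableOn_Ioc
        rw [← ofReal_integral_eq_lintegral_ofReal hint
          (Eventually.of_forall fun x => hGnn n x)]
        apply ENNReal.ofReal_le_ofReal
        have h1 : ∫ x in Set.Ioc a b, G n x = ∫ x in a..b, G n x :=
          (intervalIntegral.integral_of_le hab).symm
        rw [h1]
        have hgi : ∀ (c d : ℝ), IntervalIntegrable g volume c d :=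
          fun c d => hgc.intervalIntegrable c d
        have h2 : ∫ x in a..b, G n x
            = ((∫ x in b..(b + h n), g x) - ∫ x in a..(a + h n), g x) / h n := by
          rw [hG]
          simp only []
          rw [intervalIntegral.integral_div]
          congr 1
          have hcont' : Continuous fun x : ℝ => g (x + h n) := hgc.comp (continuous_add_right _)
          rw [intervalIntegral.integral_sub (hcont'.intervalIntegrable a b) (hgi a b)]
          have h3 : ∫ x in a..b, g (x + h n) = ∫ x in (a + h n)..(b + h n), g x :=
            intervalIntegral.integral_comp_add_right g (h n)
          rw [h3]
          have h4 : ∫ x in (a + h n)..(b + h n), g x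
              = (∫ x in (a+h n)..b, g x) + ∫ x in b..(b + h n), g x :=
            (intervalIntegral.integral_add_adjacent_intervals (hgi _ _) (hgi _ _)).symm
          have h5 : ∫ x in a..b, g x
              = (∫ x in a..(a + h n), g x) + ∫ x in (a + h n)..b, g x :=
            (intervalIntegral.integral_add_adjacent_intervals (hgi _ _) (hgi _ _)).symm
          rw [h4, h5]
          ring
        rw [h2]
        rw [div_le_iff₀ (hhpos n)]
        have hb : ∫ x in b..(b + h n), g x ≤ h n * g (b + h n) := by
          have := intervalIntegral.integral_mono_on (le_add_of_nonneg_right (hhpos n).le)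
            (hgi b (b + h n)) (intervalIntegrable_const (c := g (b + h n)))
            (fun x hx => hg hx.2)
          simpa using this
        have ha : h n * g a ≤ ∫ x in a..(a + h n), g x := by
          have := intervalIntegral.integral_mono_on (le_add_of_nonneg_right (hhpos n).le)
            (intervalIntegrable_const (c := g a)) (hgi a (a + h n))
            (fun x hx => hg hx.1)
          simpa using this
        nlinarith [hhpos n]
    _ = ENNReal.ofReal (g b - g a) := by
        apply Tendsto.liminf_eq
        apply (ENNReal.continuous_ofReal.tendsto _).comp
        have : Tendsto (fun n => b + h n) atTop (𝓝 b) := by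
          simpa using tendsto_const_nhds.add hh0
        exact ((hgc.tendsto b).comp this).sub tendsto_const_nhds

lemma aux_ftc {f : ℝ → ℝ} {K c a b : ℝ} (hc : 0 ≤ c) (hK : 0 ≤ K) (hab : a ≤ b)
    (hlip : ∀ x ∈ Set.Icc a b, ∀ y ∈ Set.Icc a b, |f y - f x| ≤ K * |y - x|)
    (hd : ∀ᵐ x, x ∈ Set.Ioo a b → ∃ d, HasDerivAt f d x ∧ d ≤ c) :
    f b - f a ≤ c * (b - a) := by
  rcases eq_or_lt_of_le hab with rfl | hab'
  · simp
  set π : ℝ → ℝ := fun x => max (min b x) a with hπdef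
  have hπmem : ∀ x, π x ∈ Set.Icc a b := fun x =>
    ⟨le_max_right _ _, max_le (min_le_left _ _) hab⟩
  have hπeq : ∀ x ∈ Set.Icc a b, π x = x := by
    intro x hx
    simp only [hπdef]
    rw [min_eq_right hx.2, max_eq_left hx.1]
  have hπlip : ∀ x y, |π y - π x| ≤ |y - x| := by
    intro x y
    calc |π y - π x| ≤ |min b y - min b x| := abs_max_sub_max_le_abs _ _ _
      _ ≤ max |b - b| |y - x| := abs_min_sub_min_le_max _ _ _ _
      _ = |y - x| := by simp
  have hπmono : Monotone π := fun x y hxy =>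
    max_le_max (min_le_min le_rfl hxy) le_rfl
  have hπcont : Continuous π := (continuous_const.min continuous_id).max continuous_const
  have hfc : ContinuousOn f (Set.Icc a b) := by
    have : LipschitzOnWith K.toNNReal f (Set.Icc a b) := by
      apply LipschitzOnWith.of_dist_le_mul
      intro x hx y hy
      rw [Real.dist_eq, Real.dist_eq, Real.coe_toNNReal _ hK]
      exact hlip y hy x hx
    exact this.continuousOn
  set F : ℝ → ℝ := fun x => f (π x) with hFdef
  have hFc : Continuous F := hfc.comp_continuous hπcont hπmem
  have hFa : F a = f a := by rw [hFdef]; simp only []; rw [hπeq a (Set.left_mem_Icc.2 hab)]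
  have hFb : F b = f b := by rw [hFdef]; simp only []; rw [hπeq b (Set.right_mem_Icc.2 hab)]
  set g : ℝ → ℝ := fun x => (K + c) * x - F x with hgdef
  have hgmono : Monotone g := by
    intro x y hxy
    simp only [hgdef]
    have h1 : F y - F x ≤ K * (y - x) := by
      calc F y - F x ≤ |F y - F x| := le_abs_self _
        _ = |f (π y) - f (π x)| := rfl
        _ ≤ K * |π y - π x| := hlip (π x) (hπmem x) (π y) (hπmem y)
        _ ≤ K * |y - x| := by nlinarith [hπlip x y, abs_nonneg (π y - π x)]
        _ = K * (y - x) := by rw [abs_of_nonneg (by linarith : (0:ℝ) ≤ y - x)]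
    nlinarith
  have hgc : Continuous g := (continuous_const.mul continuous_id).sub hFc
  have hgd : ∀ᵐ x, x ∈ Set.Ioo a b → ∃ d', HasDerivAt g d' x ∧ K ≤ d' := by
    filter_upwards [hd] with x hx hxm
    obtain ⟨d, hdd, hdc⟩ := hx hxm
    have hFd : HasDerivAt F d x := by
      apply hdd.congr_of_eventuallyEq
      filter_upwards [Ioo_mem_nhds hxm.1 hxm.2] with y hy
      simp only [hFdef]
      rw [hπeq y (Set.Ioo_subset_Icc_self hy)]
    have hlin : HasDerivAt (fun y => (K + c) * y) (K + c) x := by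
      simpa using (hasDerivAt_id x).const_mul (K + c)
    exact ⟨(K + c) - d, hlin.sub hFd, by linarith⟩
  have h1 : ENNReal.ofReal (K * (b - a)) ≤ ∫⁻ x in Set.Ioc a b, ENNReal.ofReal (deriv g x) := by
    have hs : (Set.Ioo a b : Set ℝ) =ᵐ[volume] Set.Ioc a b := Ioo_ae_eq_Ioc
    rw [← setLIntegral_congr hs]
    have hae : ∀ᵐ x ∂(volume.restrict (Set.Ioo a b)),
        ENNReal.ofReal K ≤ ENNReal.ofReal (deriv g x) := by
      filter_upwards [ae_restrict_of_ae hgd, ae_restrict_mem measurableSet_Ioo] with x hx hxm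
      obtain ⟨d', hd', hKd⟩ := hx hxm
      rw [hd'.deriv]
      exact ENNReal.ofReal_le_ofReal hKd
    calc ENNReal.ofReal (K * (b - a)) = ENNReal.ofReal K * volume (Set.Ioo a b) := by
          rw [Real.volume_Ioo, ENNReal.ofReal_mul hK]
      _ = ∫⁻ _ in Set.Ioo a b, ENNReal.ofReal K := by rw [setLIntegral_const]
      _ ≤ ∫⁻ x in Set.Ioo a b, ENNReal.ofReal (deriv g x) := lintegral_mono_ae hae
  have h2 := aux_mono_lintegral hgmono hgc hab
  have h3 : K * (b - a) ≤ g b - g a := by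
    rw [← ENNReal.ofReal_le_ofReal_iff (by nlinarith [hgmono hab] : (0:ℝ) ≤ g b - g a)]
    exact le_trans h1 h2
  simp only [hgdef, hFa, hFb] at h3
  nlinarith

lemma aux_nested {X : Type*} [NormedAddCommGroup X] [InnerProductSpace ℝ X] [CompleteSpace X]
    (C : ℕ → Set X) (hne : ∀ n, (C n).Nonempty) (hcl : ∀ n, IsClosed (C n))
    (hcv : ∀ n, Convex ℝ (C n)) (hmono : ∀ m n, m ≤ n → C n ⊆ C m)
    {M : ℝ} (hbd : ∀ n, C n ⊆ Metric.closedBall 0 M) :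
    ∃ q, (∀ n, q ∈ C n) ∧ ‖q‖ ≤ M := by
  have hmin : ∀ n, ∃ v ∈ C n, ∀ z ∈ C n, ‖v‖ ≤ ‖z‖ := by
    intro n
    obtain ⟨v, hv, hveq⟩ := exists_norm_eq_iInf_of_complete_convex (hne n)
      (hcl n).isComplete (hcv n) (0 : X)
    refine ⟨v, hv, fun z hz => ?_⟩
    have hbdd : BddBelow (Set.range fun w : C n => ‖(0:X) - w‖) :=
      ⟨0, by rintro r ⟨w, rfl⟩; exact norm_nonneg _⟩
    have := ciInf_le hbdd (⟨z, hz⟩ : C n)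
    rw [← hveq] at this
    simpa using this
  choose q hqmem hqmin using hmin
  have hqb : ∀ n, ‖q n‖ ≤ M := fun n => by
    simpa using mem_closedBall_iff_norm.1 (hbd n (hqmem n))
  have hqmono : Monotone fun n => ‖q n‖ := by
    intro n m hnm
    exact hqmin n (q m) (hmono n m hnm (hqmem m))
  set r : ℝ := ⨆ n, ‖q n‖ with hr
  have hbdd : BddAbove (Set.range fun n => ‖q n‖) := ⟨M, by rintro x ⟨n, rfl⟩; exact hqb n⟩
  have htend : Tendsto (fun n => ‖q n‖) atTop (𝓝 r) := tendsto_atTop_ciSup hqmono hbdd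
  have hle_r : ∀ n, ‖q n‖ ≤ r := fun n => le_ciSup hbdd n
  have hcauchy : CauchySeq q := by
    rw [Metric.cauchySeq_iff']
    intro ε hε
    have htend2 : Tendsto (fun n => 2 * (r ^ 2 - ‖q n‖ ^ 2)) atTop (𝓝 0) := by
      have : Tendsto (fun n => r ^ 2 - ‖q n‖ ^ 2) atTop (𝓝 (r ^ 2 - r ^ 2)) :=
        tendsto_const_nhds.sub (htend.pow 2)
      simpa using this.const_mul 2
    have hev : ∀ᶠ n in atTop, 2 * (r ^ 2 - ‖q n‖ ^ 2) < ε ^ 2 :=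
      htend2.eventually_lt_const (by positivity)
    obtain ⟨N, hN⟩ := hev.exists_forall_of_atTop
    refine ⟨N, fun n hn => ?_⟩
    -- ‖q n - q N‖² ≤ 2(‖q n‖² - ‖q N‖²)
    have hmid : (1/2 : ℝ) • q N + (1/2 : ℝ) • q n ∈ C N :=
      hcv N (hqmem N) (hmono N n hn (hqmem n)) (by norm_num) (by norm_num) (by norm_num)
    have hNmid : ‖q N‖ ≤ ‖(1/2 : ℝ) • q N + (1/2 : ℝ) • q n‖ := hqmin N _ hmid
    have hpar : ‖q N + q n‖ ^ 2 + ‖q N - q n‖ ^ 2 = 2 * (‖q N‖ ^ 2 + ‖q n‖ ^ 2) := by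
      have := parallelogram_law_with_norm ℝ (q N) (q n)
      nlinarith [this]
    have hsum : 2 * ‖q N‖ ≤ ‖q N + q n‖ := by
      have : ‖(1/2 : ℝ) • q N + (1/2 : ℝ) • q n‖ = (1/2) * ‖q N + q n‖ := by
        rw [← smul_add, norm_smul]
        simp [abs_of_nonneg]
      nlinarith [hNmid, this]
    have hq2 : ‖q N - q n‖ ^ 2 ≤ 2 * (‖q n‖ ^ 2 - ‖q N‖ ^ 2) := by
      nlinarith [hpar, hsum, norm_nonneg (q N), norm_nonneg (q N + q n)]
    have : ‖q n - q N‖ ^ 2 < ε ^ 2 := by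
      rw [norm_sub_rev]
      calc ‖q N - q n‖ ^ 2 ≤ 2 * (‖q n‖ ^ 2 - ‖q N‖ ^ 2) := hq2
        _ ≤ 2 * (r ^ 2 - ‖q N‖ ^ 2) := by nlinarith [hle_r n, norm_nonneg (q n)]
        _ < ε ^ 2 := hN N le_rfl
    have := lt_of_pow_lt_pow_left₀ 2 hε.le this
    rwa [dist_eq_norm]
  obtain ⟨ql, hql⟩ := cauchySeq_tendsto_of_complete hcauchy
  refine ⟨ql, fun m => ?_, ?_⟩
  · apply (hcl m).mem_of_tendsto hql
    filter_upwards [eventually_ge_atTop m] with n hn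
    exact hmono m n hn (hqmem n)
  · exact le_of_tendsto (hql.norm) (Eventually.of_forall hqb)

set_option maxHeartbeats 1000000 in
/-- Along a Lipschitz solution `u` of `-u'(t) ∈ A(u(t))` for a maximal monotone
operator `A`, the function `t ↦ inf {‖v‖ : v ∈ A (u t)}` is non-increasing on `[0,∞)`. -/
theorem maximal_monotone_flow_min_section_norm_antitone
    {X : Type*} [NormedAddCommGroup X] [InnerProductSpace ℝ X] [CompleteSpace X]
    (A : X → Set X) (hA : IsMaximalMonotoneOperator A)
    (u : ℝ → X)
    (hu_lip : ∃ L : NNReal, LipschitzOnWith L u (Set.Ici (0 : ℝ)))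
    (hu_dom : ∀ t : ℝ, 0 ≤ t → (A (u t)).Nonempty)
    (hu_flow : ∀ᵐ t ∂(MeasureTheory.volume.restrict (Set.Ioi (0 : ℝ))),
      ∃ w : X, HasDerivAt u w t ∧ -w ∈ A (u t)) :
    AntitoneOn (fun t => sInf {r : ℝ | ∃ v ∈ A (u t), ‖v‖ = r}) (Set.Ici (0 : ℝ)) := by
  obtain ⟨L', hL⟩ := hu_lip
  set L : ℝ := (L' : ℝ) with hLdef
  have hL0 : 0 ≤ L := L'.coe_nonneg
  -- basic Lipschitz estimate
  have hulip : ∀ x ∈ Set.Ici (0:ℝ), ∀ y ∈ Set.Ici (0:ℝ), ‖u y - u x‖ ≤ L * |y - x| := by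
    intro x hx y hy
    have := hL.dist_le_mul y hy x hx
    rwa [dist_eq_norm, Real.dist_eq] at this
  set m : ℝ → ℝ := fun t => sInf {r : ℝ | ∃ v ∈ A (u t), ‖v‖ = r} with hmdef
  have hset_ne : ∀ t, 0 ≤ t → {r : ℝ | ∃ v ∈ A (u t), ‖v‖ = r}.Nonempty := by
    intro t ht
    obtain ⟨v, hv⟩ := hu_dom t ht
    exact ⟨‖v‖, v, hv, rfl⟩
  have hset_bdd : ∀ t, BddBelow {r : ℝ | ∃ v ∈ A (u t), ‖v‖ = r} := by
    intro t
    exact ⟨0, by rintro r ⟨v, _, rfl⟩; exact norm_nonneg v⟩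
  have hm_le : ∀ t v, v ∈ A (u t) → m t ≤ ‖v‖ := by
    intro t v hv
    exact csInf_le (hset_bdd t) ⟨v, hv, rfl⟩
  have hle_m : ∀ t, 0 ≤ t → ∀ x : ℝ, (∀ v ∈ A (u t), x ≤ ‖v‖) → x ≤ m t := by
    intro t ht x hx
    apply le_csInf (hset_ne t ht)
    rintro r ⟨v, hv, rfl⟩
    exact hx v hv
  have hm0 : ∀ t, 0 ≤ t → 0 ≤ m t := fun t ht =>
    hle_m t ht 0 fun v _ => norm_nonneg v
  -- the a.e. differentiability set
  set G : Set ℝ := {x | ∃ w : X, HasDerivAt u w x ∧ -w ∈ A (u x)} with hGdef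
  have hG0 : ∀ᵐ x : ℝ, x ∈ Set.Ioi (0:ℝ) → x ∈ G :=
    (ae_restrict_iff' measurableSet_Ioi).1 hu_flow
  -- Step A
  have stepA : ∀ s, 0 ≤ s → ∀ v ∈ A (u s), ∀ t, s ≤ t → ‖u t - u s‖ ≤ ‖v‖ * (t - s) := by
    intro s hs v hv t hst
    have ht0 : (0:ℝ) ≤ t := le_trans hs hst
    apply le_of_forall_pos_le_add
    intro ε hε
    set Q : ℝ → ℝ := fun τ => ⟪u τ - u s, u τ - u s⟫_ℝ with hQdef
    have hQnorm : ∀ τ, Q τ = ‖u τ - u s‖ ^ 2 := fun τ => real_inner_self_eq_norm_sq _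
    set ζ : ℝ → ℝ := fun τ => Real.sqrt (Q τ + ε ^ 2) with hζdef
    have hQlip : ∀ x ∈ Set.Icc s t, ∀ y ∈ Set.Icc s t,
        |Q y - Q x| ≤ (2 * L * (t - s) * L) * |y - x| := by
      intro x hx y hy
      have hx0 : x ∈ Set.Ici (0:ℝ) := le_trans hs hx.1
      have hy0 : y ∈ Set.Ici (0:ℝ) := le_trans hs hy.1
      have hnx : ‖u x - u s‖ ≤ L * (t - s) := by
        have := hulip s hs x hx0
        have h2 : |x - s| ≤ t - s := by rw [abs_of_nonneg (by linarith [hx.1])]; linarith [hx.2]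
        nlinarith
      have hny : ‖u y - u s‖ ≤ L * (t - s) := by
        have := hulip s hs y hy0
        have h2 : |y - s| ≤ t - s := by rw [abs_of_nonneg (by linarith [hy.1])]; linarith [hy.2]
        nlinarith
      have hdiff : |‖u y - u s‖ - ‖u x - u s‖| ≤ L * |y - x| := by
        have h1 : |‖u y - u s‖ - ‖u x - u s‖| ≤ ‖(u y - u s) - (u x - u s)‖ :=
          abs_norm_sub_norm_le _ _
        have h2 : (u y - u s) - (u x - u s) = u y - u x := by abel
        rw [h2] at h1
        exact le_trans h1 (hulip x hx0 y hy0)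
      rw [hQnorm, hQnorm]
      have expand : ‖u y - u s‖ ^ 2 - ‖u x - u s‖ ^ 2
          = (‖u y - u s‖ + ‖u x - u s‖) * (‖u y - u s‖ - ‖u x - u s‖) := by ring
      rw [abs_le] at hdiff ⊢
      constructor <;> nlinarith [norm_nonneg (u y - u s), norm_nonneg (u x - u s),
        abs_nonneg (y - x), le_abs_self (y - x), neg_abs_le (y - x)]
    have hζlip : ∀ x ∈ Set.Icc s t, ∀ y ∈ Set.Icc s t,
        |ζ y - ζ x| ≤ ((2 * L * (t - s) * L) / (2 * ε)) * |y - x| := by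
      intro x hx y hy
      have hQx : 0 ≤ Q x := by rw [hQnorm]; positivity
      have hQy : 0 ≤ Q y := by rw [hQnorm]; positivity
      have hsx : ε ≤ Real.sqrt (Q x + ε ^ 2) :=
        calc ε = Real.sqrt (ε ^ 2) := (Real.sqrt_sq hε.le).symm
          _ ≤ Real.sqrt (Q x + ε ^ 2) := Real.sqrt_le_sqrt (by linarith)
      have hsy : ε ≤ Real.sqrt (Q y + ε ^ 2) :=
        calc ε = Real.sqrt (ε ^ 2) := (Real.sqrt_sq hε.le).symm
          _ ≤ Real.sqrt (Q y + ε ^ 2) := Real.sqrt_le_sqrt (by linarith)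
      have hkey : |ζ y - ζ x| * (2 * ε) ≤ |Q y - Q x| := by
        have h1 : (ζ y - ζ x) * (ζ y + ζ x) = Q y - Q x := by
          have e1 : ζ y ^ 2 = Q y + ε ^ 2 := Real.sq_sqrt (by nlinarith [sq_nonneg ε])
          have e2 : ζ x ^ 2 = Q x + ε ^ 2 := Real.sq_sqrt (by nlinarith [sq_nonneg ε])
          nlinarith [e1, e2]
        have h2 : 2 * ε ≤ ζ y + ζ x := by
          simp only [hζdef]; linarith
        calc |ζ y - ζ x| * (2 * ε) ≤ |ζ y - ζ x| * (ζ y + ζ x) := by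
              apply mul_le_mul_of_nonneg_left h2 (abs_nonneg _)
          _ = |(ζ y - ζ x) * (ζ y + ζ x)| := by
              rw [abs_mul, abs_of_nonneg (by linarith : (0:ℝ) ≤ ζ y + ζ x)]
          _ = |Q y - Q x| := by rw [h1]
      have := hQlip x hx y hy
      rw [div_mul_eq_mul_div, le_div_iff₀ (by linarith : (0:ℝ) < 2 * ε)]
      nlinarith
    have hζd : ∀ᵐ x : ℝ, x ∈ Set.Ioo s t → ∃ d, HasDerivAt ζ d x ∧ d ≤ ‖v‖ := by
      filter_upwards [hG0] with x hx hxm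
      obtain ⟨w, hw, hwA⟩ := hx (lt_of_le_of_lt hs hxm.1)
      have hQd : HasDerivAt Q (⟪u x - u s, w⟫_ℝ + ⟪w, u x - u s⟫_ℝ) x :=
        HasDerivAt.inner ℝ (hw.sub_const (u s)) (hw.sub_const (u s))
      have hS0 : 0 < Q x + ε ^ 2 := by
        rw [hQnorm]; positivity
      have hsq : HasDerivAt (fun τ => Real.sqrt (Q τ + ε ^ 2))
          (1 / (2 * Real.sqrt (Q x + ε ^ 2)) * (⟪u x - u s, w⟫_ℝ + ⟪w, u x - u s⟫_ℝ)) x := by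
        exact (Real.hasDerivAt_sqrt hS0.ne').comp x (hQd.add_const (ε ^ 2))
      refine ⟨_, hsq, ?_⟩
      have hmon : 0 ≤ ⟪-w - v, u x - u s⟫_ℝ := hA.1 (u x) (u s) (-w) v hwA hv
      have hinner : ⟪w, u x - u s⟫_ℝ ≤ ⟪-v, u x - u s⟫_ℝ := by
        have expand : ⟪-w - v, u x - u s⟫_ℝ = ⟪-v, u x - u s⟫_ℝ - ⟪w, u x - u s⟫_ℝ := by
          rw [show -w - v = -v - w by abel, inner_sub_left]
        linarith [hmon, expand ▸ hmon]
      have hCS : ⟪-v, u x - u s⟫_ℝ ≤ ‖v‖ * ‖u x - u s‖ := by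
        have := real_inner_le_norm (-v) (u x - u s)
        rwa [norm_neg] at this
      have hnormle : ‖u x - u s‖ ≤ Real.sqrt (Q x + ε ^ 2) := by
        rw [show ‖u x - u s‖ = Real.sqrt (‖u x - u s‖ ^ 2) by rw [Real.sqrt_sq (norm_nonneg _)]]
        apply Real.sqrt_le_sqrt
        rw [← hQnorm]; nlinarith
      have hsqrtpos : 0 < Real.sqrt (Q x + ε ^ 2) := Real.sqrt_pos.2 hS0
      have hsym : ⟪u x - u s, w⟫_ℝ = ⟪w, u x - u s⟫_ℝ := real_inner_comm _ _
      rw [hsym]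
      have hd2 : ⟪w, u x - u s⟫_ℝ + ⟪w, u x - u s⟫_ℝ ≤ 2 * (‖v‖ * Real.sqrt (Q x + ε ^ 2)) := by
        nlinarith [le_trans hinner (le_trans hCS (by nlinarith [norm_nonneg v] :
          ‖v‖ * ‖u x - u s‖ ≤ ‖v‖ * Real.sqrt (Q x + ε ^ 2)))]
      rw [div_mul_eq_mul_div, one_mul, div_le_iff₀ (by linarith)]
      nlinarith
    have := aux_ftc (norm_nonneg v)
      (div_nonneg (mul_nonneg (mul_nonneg (by linarith) (by linarith)) hL0) (by linarith) :
        (0:ℝ) ≤ (2 * L * (t - s) * L) / (2 * ε))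
      hst hζlip hζd
    have hζs : ζ s = ε := by
      simp only [hζdef, hQdef]
      rw [sub_self, inner_zero_left, zero_add, Real.sqrt_sq hε.le]
    have hζt : ‖u t - u s‖ ≤ ζ t := by
      rw [show ‖u t - u s‖ = Real.sqrt (‖u t - u s‖ ^ 2) by rw [Real.sqrt_sq (norm_nonneg _)]]
      apply Real.sqrt_le_sqrt
      rw [← hQnorm]; nlinarith
    linarith
  -- translation invariance for a.e. statements
  have hGtrans : ∀ h : ℝ, ∀ᵐ x : ℝ, (x + h) ∈ Set.Ioi (0:ℝ) → (x + h) ∈ G := by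
    intro h
    have hmp : MeasurePreserving (fun x : ℝ => x + h) volume volume :=
      ⟨measurable_add_const h, map_add_right_eq_self volume h⟩
    have hnull := hmp.quasiMeasurePreserving.preimage_null (ae_iff.1 hG0)
    rw [ae_iff]
    exact hnull
  -- Step B : contraction property
  have stepB : ∀ h : ℝ, 0 < h → ∀ s τ : ℝ, 0 ≤ s → s ≤ τ →
      ‖u (τ + h) - u τ‖ ≤ ‖u (s + h) - u s‖ := by
    intro h hh s τ hs hsτ
    set f₁ : ℝ → ℝ := fun x => ⟪u (x + h) - u x, u (x + h) - u x⟫_ℝ with hf₁def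
    have hf₁norm : ∀ x, f₁ x = ‖u (x + h) - u x‖ ^ 2 := fun x => real_inner_self_eq_norm_sq _
    have hf₁lip : ∀ x ∈ Set.Icc s τ, ∀ y ∈ Set.Icc s τ,
        |f₁ y - f₁ x| ≤ (4 * L * L * h) * |y - x| := by
      intro x hx y hy
      have hx0 : x ∈ Set.Ici (0:ℝ) := le_trans hs hx.1
      have hy0 : y ∈ Set.Ici (0:ℝ) := le_trans hs hy.1
      have hxh0 : x + h ∈ Set.Ici (0:ℝ) := by simp only [Set.mem_Ici] at hx0 ⊢; linarith
      have hyh0 : y + h ∈ Set.Ici (0:ℝ) := by simp only [Set.mem_Ici] at hy0 ⊢; linarith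
      have hax : ‖u (x + h) - u x‖ ≤ L * h := by
        have := hulip x hx0 (x + h) hxh0
        rwa [show x + h - x = h by ring, abs_of_nonneg hh.le] at this
      have hay : ‖u (y + h) - u y‖ ≤ L * h := by
        have := hulip y hy0 (y + h) hyh0
        rwa [show y + h - y = h by ring, abs_of_nonneg hh.le] at this
      have hdiff : |‖u (y + h) - u y‖ - ‖u (x + h) - u x‖| ≤ 2 * L * |y - x| := by
        have h1 : |‖u (y + h) - u y‖ - ‖u (x + h) - u x‖|
            ≤ ‖(u (y + h) - u y) - (u (x + h) - u x)‖ := abs_norm_sub_norm_le _ _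
        have h2 : ‖(u (y + h) - u y) - (u (x + h) - u x)‖
            ≤ ‖u (y + h) - u (x + h)‖ + ‖u y - u x‖ := by
          have h3 : (u (y + h) - u y) - (u (x + h) - u x)
              = (u (y + h) - u (x + h)) - (u y - u x) := by abel
          rw [h3]; exact norm_sub_le _ _
        have h4 := hulip (x + h) hxh0 (y + h) hyh0
        have h5 := hulip x hx0 y hy0
        have h6 : |y + h - (x + h)| = |y - x| := by rw [show y + h - (x + h) = y - x by ring]
        rw [h6] at h4
        calc |‖u (y + h) - u y‖ - ‖u (x + h) - u x‖|
            ≤ ‖u (y + h) - u (x + h)‖ + ‖u y - u x‖ := le_trans h1 h2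
          _ ≤ 2 * L * |y - x| := by linarith
      rw [hf₁norm, hf₁norm]
      rw [abs_le] at hdiff ⊢
      constructor <;> nlinarith [norm_nonneg (u (y + h) - u y), norm_nonneg (u (x + h) - u x),
        abs_nonneg (y - x)]
    have hf₁d : ∀ᵐ x : ℝ, x ∈ Set.Ioo s τ → ∃ d, HasDerivAt f₁ d x ∧ d ≤ 0 := by
      filter_upwards [hG0, hGtrans h] with x hx hxh hxm
      have hx0 : (0:ℝ) < x := lt_of_le_of_lt hs hxm.1
      obtain ⟨w₀, hw₀, hw₀A⟩ := hx hx0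
      obtain ⟨w₁, hw₁, hw₁A⟩ := hxh (by simp only [Set.mem_Ioi]; linarith : x + h ∈ Set.Ioi (0:ℝ))
      have hshift : HasDerivAt (fun y => u (y + h)) w₁ x := by
        have := hw₁.scomp x ((hasDerivAt_id x).add_const h)
        simpa [Function.comp_def] using this
      have hdiffd : HasDerivAt (fun y => u (y + h) - u y) (w₁ - w₀) x := hshift.sub hw₀
      have hf₁x : HasDerivAt f₁
          (⟪u (x + h) - u x, w₁ - w₀⟫_ℝ + ⟪w₁ - w₀, u (x + h) - u x⟫_ℝ) x :=
        HasDerivAt.inner ℝ hdiffd hdiffd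
      refine ⟨_, hf₁x, ?_⟩
      have hmon := hA.1 (u (x + h)) (u x) (-w₁) (-w₀) hw₁A hw₀A
      have hexp : ⟪-w₁ - -w₀, u (x + h) - u x⟫_ℝ = -⟪w₁ - w₀, u (x + h) - u x⟫_ℝ := by
        rw [show -w₁ - -w₀ = -(w₁ - w₀) by abel, inner_neg_left]
      rw [hexp] at hmon
      have hsym : ⟪u (x + h) - u x, w₁ - w₀⟫_ℝ = ⟪w₁ - w₀, u (x + h) - u x⟫_ℝ :=
        real_inner_comm _ _
      rw [hsym]
      linarith
    have := aux_ftc le_rfl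
      (mul_nonneg (mul_nonneg (mul_nonneg (by norm_num) hL0) hL0) hh.le :
        (0:ℝ) ≤ 4 * L * L * h) hsτ hf₁lip hf₁d
    have hf : f₁ τ ≤ f₁ s := by linarith
    rw [hf₁norm, hf₁norm] at hf
    calc ‖u (τ + h) - u τ‖ = Real.sqrt (‖u (τ + h) - u τ‖ ^ 2) :=
          (Real.sqrt_sq (norm_nonneg _)).symm
      _ ≤ Real.sqrt (‖u (s + h) - u s‖ ^ 2) := Real.sqrt_le_sqrt hf
      _ = ‖u (s + h) - u s‖ := Real.sqrt_sq (norm_nonneg _)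
  -- Step D : derivative norm bound
  have stepD : ∀ s, 0 ≤ s → ∀ x w, s < x → HasDerivAt u w x → ‖w‖ ≤ m s := by
    intro s hs x w hsx hw
    apply hle_m s hs
    intro v hv
    have hslope : Tendsto (fun y => ‖slope u x y‖) (𝓝[>] x) (𝓝 ‖w‖) := by
      have h1 := hasDerivAt_iff_tendsto_slope.1 hw
      have h2 : (𝓝[>] x : Filter ℝ) ≤ 𝓝[≠] x :=
        nhdsWithin_mono x fun y hy => ne_of_gt hy
      exact (h1.mono_left h2).norm
    apply le_of_tendsto hslope
    filter_upwards [self_mem_nhdsWithin] with y hy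
    have hyx : 0 < y - x := sub_pos.2 hy
    have hBB := stepB (y - x) hyx s x hs hsx.le
    rw [show x + (y - x) = y by ring] at hBB
    have hAA := stepA s hs v hv (s + (y - x)) (by linarith)
    rw [show s + (y - x) - s = y - x by ring] at hAA
    have hnorm : ‖u y - u x‖ ≤ ‖v‖ * (y - x) := le_trans hBB hAA
    have hslope_eq : ‖slope u x y‖ = ‖u y - u x‖ / (y - x) := by
      rw [slope, vsub_eq_sub, norm_smul, norm_inv, Real.norm_eq_abs,
        abs_of_pos hyx, div_eq_inv_mul]
    rw [hslope_eq, div_le_iff₀ hyx]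
    linarith
  -- Step E : conclusion
  intro s hs t ht hst
  simp only [Set.mem_Ici] at hs ht
  rcases eq_or_lt_of_le hst with rfl | hst'
  · exact le_rfl
  show m t ≤ m s
  -- choose good points approaching t from the left
  have hchoice : ∀ n : ℕ, ∃ x w, x ∈ Set.Ioo (max s (t - 1/(n+1))) t ∧
      HasDerivAt u w x ∧ -w ∈ A (u x) := by
    intro n
    have hα : max s (t - 1/(n+1)) < t := by
      apply max_lt hst'
      have : (0:ℝ) < 1/(n+1) := by positivity
      linarith
    by_contra hcon
    push_neg at hcon
    have hsub : Set.Ioo (max s (t - 1/(n+1))) t ⊆ {x | ¬(x ∈ Set.Ioi (0:ℝ) → x ∈ G)} := by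
      intro x hx
      simp only [Set.mem_setOf_eq, Classical.not_imp]
      constructor
      · simp only [Set.mem_Ioi]
        exact lt_of_le_of_lt (le_trans hs (le_max_left _ _)) hx.1
      · rintro ⟨w, hw, hwA⟩
        exact hcon x w hx hw hwA
    have hnull := measure_mono_null hsub (ae_iff.1 hG0)
    rw [Real.volume_Ioo, ENNReal.ofReal_eq_zero] at hnull
    linarith
  choose τ w hτ hw hwA using hchoice
  have hτs : ∀ n, s < τ n := fun n => lt_of_le_of_lt (le_max_left _ _) (hτ n).1
  have hτ0 : ∀ n, (0:ℝ) ≤ τ n := fun n => le_trans hs (hτs n).le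
  have hwb : ∀ n, ‖w n‖ ≤ m s := fun n => stepD s hs (τ n) (w n) (hτs n) (hw n)
  have huconv : ∀ n : ℕ, ‖u t - u (τ n)‖ ≤ L * (1/(n+1)) := by
    intro n
    have h1 := hulip (τ n) (hτ0 n) t ht
    have h2 : |t - τ n| ≤ 1/(n+1) := by
      rw [abs_of_nonneg (by linarith [(hτ n).2] : (0:ℝ) ≤ t - τ n)]
      have := (hτ n).1
      have h3 : t - 1/(n+1) ≤ max s (t - 1/(n+1)) := le_max_right _ _
      linarith
    nlinarith
  -- nested convex sets
  set C : ℕ → Set X := fun n => closure (convexHull ℝ ((fun k => -w k) '' Set.Ici n)) with hCdef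
  have hqex : ∃ q, (∀ n, q ∈ C n) ∧ ‖q‖ ≤ m s := by
    apply aux_nested
    · intro n
      exact ⟨-w n, subset_closure (subset_convexHull ℝ _ ⟨n, Set.mem_Ici.2 le_rfl, rfl⟩)⟩
    · intro n; exact isClosed_closure
    · intro n; exact (convex_convexHull ℝ _).closure
    · intro a b hab
      exact closure_mono (convexHull_mono (Set.image_mono (Set.Ici_subset_Ici.2 hab)))
    · intro n
      apply closure_minimal
      apply convexHull_min
      · rintro z ⟨k, _, rfl⟩
        rw [Metric.mem_closedBall, dist_zero_right, norm_neg]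
        exact hwb k
      · exact convex_closedBall 0 (m s)
      · exact Metric.isClosed_closedBall
  obtain ⟨q, hqC, hqnorm⟩ := hqex
  have hqA : q ∈ A (u t) := by
    apply aux_max_mem hA
    intro y v' hv'
    have hker : ∀ n : ℕ,
        ⟪u t - y, v'⟫_ℝ - (‖v'‖ + m s) * (L * (1/(n+1))) ≤ ⟪u t - y, q⟫_ℝ := by
      intro n
      set σ : ℝ := L * (1/(n+1)) with hσdef
      have hσ0 : 0 ≤ σ := mul_nonneg hL0 (by positivity)
      set c : ℝ := ⟪u t - y, v'⟫_ℝ with hcdef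
      have hHconv : Convex ℝ {z : X | c - (‖v'‖ + m s) * σ ≤ ⟪u t - y, z⟫_ℝ} := by
        apply convex_halfSpace_ge
        exact ⟨fun z₁ z₂ => inner_add_right _ _ _, fun r z => real_inner_smul_right _ _ _⟩
      have hHclosed : IsClosed {z : X | c - (‖v'‖ + m s) * σ ≤ ⟪u t - y, z⟫_ℝ} :=
        isClosed_le continuous_const (continuous_const.inner continuous_id)
      have hsubH : C n ⊆ {z : X | c - (‖v'‖ + m s) * σ ≤ ⟪u t - y, z⟫_ℝ} := by
        apply closure_minimal _ hHclosed
        apply convexHull_min _ hHconv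
        rintro z ⟨k, hk, rfl⟩
        simp only [Set.mem_setOf_eq]
        have hmon := hA.1 (u (τ k)) y (-(w k)) v' (hwA k) hv'
        have e1 : ⟪u t - y, -(w k)⟫_ℝ
            = ⟪u (τ k) - y, -(w k)⟫_ℝ + ⟪u t - u (τ k), -(w k)⟫_ℝ := by
          rw [← inner_add_left]
          congr 1
          abel
        have e2 : ⟪u (τ k) - y, v'⟫_ℝ ≤ ⟪u (τ k) - y, -(w k)⟫_ℝ := by
          have expand : ⟪-(w k) - v', u (τ k) - y⟫_ℝ
              = ⟪u (τ k) - y, -(w k)⟫_ℝ - ⟪u (τ k) - y, v'⟫_ℝ := by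
            rw [inner_sub_left, real_inner_comm (-(w k)), real_inner_comm v']
          linarith [expand ▸ hmon]
        have e3 : ⟪u (τ k) - y, v'⟫_ℝ = c - ⟪u t - u (τ k), v'⟫_ℝ := by
          rw [hcdef, ← inner_sub_left]
          congr 1
          abel
        have hCS1 := abs_real_inner_le_norm (u t - u (τ k)) v'
        have hCS2 : |⟪u t - u (τ k), -(w k)⟫_ℝ| ≤ ‖u t - u (τ k)‖ * ‖w k‖ := by
          have := abs_real_inner_le_norm (u t - u (τ k)) (-(w k))
          rwa [norm_neg] at this
        have hub : ‖u t - u (τ k)‖ ≤ σ := by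
          refine le_trans (huconv k) ?_
          rw [hσdef]
          apply mul_le_mul_of_nonneg_left _ hL0
          have h1 : (n:ℝ) + 1 ≤ (k:ℝ) + 1 := by
            have := Set.mem_Ici.1 hk
            exact_mod_cast by omega
          apply div_le_div_of_nonneg_left (by norm_num) (by positivity) h1
        have hb1 : ‖u t - u (τ k)‖ * ‖v'‖ ≤ σ * ‖v'‖ :=
          mul_le_mul_of_nonneg_right hub (norm_nonneg _)
        have hb2 : ‖u t - u (τ k)‖ * ‖w k‖ ≤ σ * m s :=
          mul_le_mul hub (hwb k) (norm_nonneg _) hσ0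
        have habs1 := abs_le.1 hCS1
        have habs2 := abs_le.1 hCS2
        have hβexp : (‖v'‖ + m s) * σ = σ * ‖v'‖ + σ * m s := by ring
        linarith [habs1.1, habs1.2, habs2.1, habs2.2]
      have := hsubH (hqC n)
      simpa using this
    have hβ0 : Tendsto (fun n : ℕ => ⟪u t - y, v'⟫_ℝ - (‖v'‖ + m s) * (L * (1/(n+1))))
        atTop (𝓝 (⟪u t - y, v'⟫_ℝ)) := by
      have h1 : Tendsto (fun n : ℕ => (1:ℝ)/(n+1)) atTop (𝓝 0) :=
        tendsto_one_div_add_atTop_nhds_zero_nat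
      have h2 : Tendsto (fun n : ℕ => (‖v'‖ + m s) * (L * (1/(n+1)))) atTop (𝓝 0) := by
        have := (h1.const_mul L).const_mul (‖v'‖ + m s)
        simpa using this
      simpa using tendsto_const_nhds.sub h2
    have hfin : ⟪u t - y, v'⟫_ℝ ≤ ⟪u t - y, q⟫_ℝ :=
      le_of_tendsto hβ0 (Eventually.of_forall hker)
    rw [inner_sub_left]
    rw [real_inner_comm q (u t - y), real_inner_comm v' (u t - y)] at hfin
    linarith
  exact le_trans (hm_le t q hqA) hqnorm
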